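/- Let E be an infinite-dimensional vector space and (e_i)_{i∈I} a family in E indexed by an infinite set I. Suppose there exists a ∈ I such that the family is constant zero on Orb_φ(a) for some map φ : I → I with I \ Orb_φ(a) infinite, and the family restricted to I \ Orb_φ(a) is a linearly independent family spanning an infinite-dimensional space. Then there exists a linear operator T : span{e_i}_{i∈I} → E with T(e_i) = e_{φ(i)} for all i∈I, span{e_i}_{i∈I} is infinite-dimensional, and (e_i)_{i∈I} is not linearly independent. -/

import Mathlib

theorem stmt_15 {K : Type*} [Field K] {E : Type*} [AddCommGroup E] [Module K E]
    (hE : ¬ Module.Finite K E)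
    {I : Type*} [Infinite I]
    (e : I → E) (φ : I → I) (a : I)
    (horbc : (Set.range fun n : ℕ => φ^[n] a)ᶜ.Infinite)
    (hzero : ∀ i ∈ Set.range (fun n : ℕ => φ^[n] a), e i = 0)
    (hind : LinearIndependent K
      (fun i : ↥((Set.range fun n : ℕ => φ^[n] a)ᶜ) => e (i : I)))
    (hspan : ¬ Module.Finite K
      ↥(Submodule.span K (e '' ((Set.range fun n : ℕ => φ^[n] a)ᶜ)))) :
    (∃ T : ↥(Submodule.span K (Set.range e)) →ₗ[K] E,
      ∀ i : I, T ⟨e i, Submodule.subset_span (Set.mem_range_self i)⟩ = e (φ i)) ∧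
    ¬ Module.Finite K ↥(Submodule.span K (Set.range e)) ∧
    ¬ LinearIndependent K e := by
  set S : Set I := Set.range fun n : ℕ => φ^[n] a with hS
  have hrange : (Set.range fun i : ↥Sᶜ => e (i : I)) = e '' Sᶜ := by
    rw [← Set.image_eq_range]
  have hseq : Submodule.span K (Set.range e) = Submodule.span K (e '' Sᶜ) := by
    apply le_antisymm
    · rw [Submodule.span_le]
      rintro _ ⟨i, rfl⟩
      by_cases hi : i ∈ S
      · rw [hzero i hi]; exact (Submodule.span K (e '' Sᶜ)).zero_mem
      · exact Submodule.subset_span ⟨i, hi, rfl⟩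
    · exact Submodule.span_mono (Set.image_subset_range e _)
  -- basis of the span of the independent family
  let B := Module.Basis.span hind
  have hspan2 : Submodule.span K (Set.range e)
      = Submodule.span K (Set.range fun i : ↥Sᶜ => e (i : I)) := by
    rw [hrange]; exact hseq
  let eq1 := LinearEquiv.ofEq _ _ hspan2
  let T : ↥(Submodule.span K (Set.range e)) →ₗ[K] E :=
    ((B.constr K (fun i : ↥Sᶜ => e (φ (i : I)))).comp eq1.toLinearMap)
  refine ⟨⟨T, ?_⟩, ?_, ?_⟩
  · intro i
    by_cases hi : i ∈ S
    · have h1 : e i = 0 := hzero i hi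
      have h2 : φ i ∈ S := by
        obtain ⟨n, rfl⟩ := hi
        exact ⟨n + 1, Function.iterate_succ_apply' φ n a⟩
      have : (⟨e i, Submodule.subset_span (Set.mem_range_self i)⟩ :
          ↥(Submodule.span K (Set.range e))) = 0 := by
        exact Subtype.ext h1
      rw [this, map_zero, hzero _ h2]
    · have hmem : e i ∈ Submodule.span K (Set.range fun i : ↥Sᶜ => e (i : I)) := by
        exact Submodule.subset_span ⟨⟨i, hi⟩, rfl⟩
      have heq1 : eq1 ⟨e i, Submodule.subset_span (Set.mem_range_self i)⟩
          = ⟨e i, hmem⟩ := rfl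
      have hBi : B ⟨i, hi⟩ = ⟨e i, hmem⟩ := by
        apply Subtype.ext
        exact congrArg Subtype.val (Module.Basis.span_apply hind ⟨i, hi⟩)
      show B.constr K (fun i : ↥Sᶜ => e (φ (i : I)))
          (eq1 ⟨e i, Submodule.subset_span (Set.mem_range_self i)⟩) = e (φ i)
      rw [heq1, ← hBi, Module.Basis.constr_basis]
  · intro hfin
    exact hspan (hseq ▸ hfin)
  · intro hli
    exact hli.ne_zero a (hzero a ⟨0, rfl⟩)
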